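/- Let n ≥ 1 and λ ∈ ℝ \ {0}. Define P_λ(x,ρ) = π^{−n/2} (Γ((n−iλ)/2)/Γ(−iλ)) ρ^{(n−iλ)/2} (ρ² + |x|²)^{−(n−iλ)/2} for x ∈ ℝⁿ, ρ > 0, and φ_λ(x,ρ) = ∫_{ℝⁿ} P_λ(x−u,ρ) P_{−λ}(u,1) du (this integral converges absolutely). Then for all x, y ∈ ℝⁿ and all ρ, r > 0, φ_λ((x−y)/r, ρ/r) = ∫_{ℝⁿ} P_λ(x−u,ρ) P_{−λ}(y−u,r) du. (In other words, the spherical function φ_λ satisfies φ_λ((y,r)^{−1}(x,ρ)) = ∫ P_λ(x−u,ρ) P_{−λ}(y−u,r) du for the group law (x,r)(x',r') = (x+rx', rr') on ℝⁿ × ℝ₊.) -/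

import Mathlib

open MeasureTheory Complex

/-- The generalized Poisson kernel
`P_λ(x,ρ) = π^{−n/2} (Γ((n−iλ)/2)/Γ(−iλ)) ρ^{(n−iλ)/2} (ρ²+|x|²)^{−(n−iλ)/2}`. -/
noncomputable def Pker (n : ℕ) (lam : ℝ) (x : Fin n → ℝ) (ρ : ℝ) : ℂ :=
  ((Real.pi ^ (-(n : ℝ) / 2) : ℝ) : ℂ) *
    (Complex.Gamma (((n : ℂ) - Complex.I * lam) / 2) / Complex.Gamma (-(Complex.I * lam))) *
    (ρ : ℂ) ^ (((n : ℂ) - Complex.I * lam) / 2) *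
    ((ρ ^ 2 + ∑ j, x j ^ 2 : ℝ) : ℂ) ^ (-(((n : ℂ) - Complex.I * lam) / 2))

/-- absolute convergence of the integral defining the spherical function
`φ_λ(x,ρ) = ∫ P_λ(x−u,ρ) P_{−λ}(u,1) du` and the identity
`φ_λ((x−y)/r, ρ/r) = ∫ P_λ(x−u,ρ) P_{−λ}(y−u,r) du`. -/

lemma pker_neg (n : ℕ) (lam : ℝ) (x : Fin n → ℝ) (ρ : ℝ) :
    Pker n lam (-x) ρ = Pker n lam x ρ := by
  simp [Pker]

lemma continuous_pker (n : ℕ) (lam : ℝ) (ρ : ℝ) (hρ : 0 < ρ) :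
    Continuous fun x : Fin n → ℝ => Pker n lam x ρ := by
  unfold Pker
  refine continuous_const.mul ?_
  have hb : Continuous fun x : Fin n → ℝ => ((ρ ^ 2 + ∑ j, x j ^ 2 : ℝ) : ℂ) := by
    fun_prop
  rw [continuous_iff_continuousAt]
  intro x
  have hpos : (0:ℝ) < ρ ^ 2 + ∑ j, x j ^ 2 := by positivity
  exact hb.continuousAt.cpow continuousAt_const (Complex.ofReal_mem_slitPlane.2 hpos)

lemma pker_norm (n : ℕ) (lam : ℝ) {ρ : ℝ} (hρ : 0 < ρ) (x : Fin n → ℝ) :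
    ‖Pker n lam x ρ‖ =
      (Real.pi ^ (-(n : ℝ) / 2) *
        ‖Complex.Gamma (((n : ℂ) - Complex.I * lam) / 2) / Complex.Gamma (-(Complex.I * lam))‖ *
        ρ ^ ((n : ℝ) / 2)) * (ρ ^ 2 + ∑ j, x j ^ 2) ^ (-(n : ℝ) / 2) := by
  have hpos : (0:ℝ) < ρ ^ 2 + ∑ j, x j ^ 2 := by positivity
  have hre : ((((n : ℂ) - Complex.I * lam) / 2)).re = (n:ℝ)/2 := by simp [Complex.div_re]
  rw [Pker, norm_mul, norm_mul, norm_mul,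
    Complex.norm_cpow_eq_rpow_re_of_pos hρ,
    Complex.norm_cpow_eq_rpow_re_of_pos hpos, Complex.neg_re, hre,
    Complex.norm_real, Real.norm_eq_abs]
  rw [abs_of_pos (by positivity)]
  ring_nf

lemma sq_norm_le_sum (n : ℕ) (v : Fin n → ℝ) : ‖v‖ ^ 2 ≤ ∑ j, v j ^ 2 := by
  have h : ‖v‖ ≤ Real.sqrt (∑ j, v j ^ 2) := by
    refine (pi_norm_le_iff_of_nonneg (Real.sqrt_nonneg _)).2 fun i => ?_
    rw [Real.norm_eq_abs, ← Real.sqrt_sq_eq_abs]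
    exact Real.sqrt_le_sqrt (Finset.single_le_sum (fun j _ => sq_nonneg (v j)) (Finset.mem_univ i))
  calc ‖v‖ ^ 2 ≤ Real.sqrt (∑ j, v j ^ 2) ^ 2 := by
        have := norm_nonneg v; nlinarith
    _ = ∑ j, v j ^ 2 := Real.sq_sqrt (by positivity)

lemma pker_decay (n : ℕ) (lam : ℝ) {ρ : ℝ} (hρ : 0 < ρ) (x : Fin n → ℝ) :
    ∃ C : ℝ, 0 ≤ C ∧ ∀ u : Fin n → ℝ,
      ‖Pker n lam (x - u) ρ‖ ≤ C * (1 + ‖u‖) ^ (-(n : ℝ)) := by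
  set A : ℝ := Real.pi ^ (-(n : ℝ) / 2) *
        ‖Complex.Gamma (((n : ℂ) - Complex.I * lam) / 2) / Complex.Gamma (-(Complex.I * lam))‖ *
        ρ ^ ((n : ℝ) / 2) with hA
  have hA0 : 0 ≤ A := by positivity
  set M : ℝ := 2 * (1 + ‖x‖) ^ 2 * max 1 ρ⁻¹ ^ 2 with hM
  have hM0 : 0 < M := by positivity
  refine ⟨A * M ^ ((n : ℝ) / 2), by positivity, fun u => ?_⟩
  set S : ℝ := ∑ j, (x - u) j ^ 2 with hS
  have hS0 : 0 ≤ S := by positivity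
  have hSle : ‖x - u‖ ^ 2 ≤ S := sq_norm_le_sum n (x - u)
  have hu : ‖u‖ ≤ ‖x‖ + ‖x - u‖ := by
    calc ‖u‖ = ‖x - (x - u)‖ := by congr 1; abel
      _ ≤ ‖x‖ + ‖x - u‖ := norm_sub_le _ _
  have hmax : 1 ≤ max 1 ρ⁻¹ := le_max_left _ _
  have hmaxρ : 1 ≤ max 1 ρ⁻¹ * ρ := by
    have h := mul_le_mul_of_nonneg_right (le_max_right 1 ρ⁻¹) hρ.le
    rwa [inv_mul_cancel₀ hρ.ne'] at h
  have key : (1 + ‖u‖) ^ 2 ≤ M * (ρ ^ 2 + S) := by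
    have h1 : (1 + ‖u‖) ^ 2 ≤ (1 + ‖x‖) ^ 2 * (1 + ‖x - u‖) ^ 2 := by
      have h2 : 1 + ‖u‖ ≤ (1 + ‖x‖) * (1 + ‖x - u‖) := by
        have := norm_nonneg x; have := norm_nonneg (x - u); nlinarith
      have := norm_nonneg u; nlinarith
    have h3 : (1 + ‖x - u‖) ^ 2 ≤ 2 * (1 + ‖x - u‖ ^ 2) := by
      nlinarith [sq_nonneg (1 - ‖x - u‖), norm_nonneg (x - u)]
    have h4 : 1 + S ≤ max 1 ρ⁻¹ ^ 2 * (ρ ^ 2 + S) := by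
      have e1 : 1 ≤ (max 1 ρ⁻¹ * ρ) ^ 2 := by nlinarith
      have hm2 : 1 ≤ max 1 ρ⁻¹ ^ 2 := by nlinarith [hmax]
      have e2 : S ≤ max 1 ρ⁻¹ ^ 2 * S := le_mul_of_one_le_left hS0 hm2
      nlinarith
    have hxn := norm_nonneg x
    nlinarith [sq_nonneg (1 + ‖x - u‖), sq_nonneg (1 + ‖x‖)]
  have hb : M⁻¹ * (1 + ‖u‖) ^ 2 ≤ ρ ^ 2 + S := by
    rw [inv_mul_le_iff₀ hM0]; linarith [key]
  have hb0 : 0 < M⁻¹ * (1 + ‖u‖) ^ 2 := by positivity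
  have hr1 : (ρ ^ 2 + S) ^ (-(n : ℝ) / 2) ≤ (M⁻¹ * (1 + ‖u‖) ^ 2) ^ (-(n : ℝ) / 2) :=
    Real.rpow_le_rpow_of_nonpos hb0 hb (by
      have : (0:ℝ) ≤ (n:ℝ) := n.cast_nonneg; linarith)
  have hr2 : (M⁻¹ * (1 + ‖u‖) ^ 2) ^ (-(n : ℝ) / 2)
      = M ^ ((n : ℝ) / 2) * (1 + ‖u‖) ^ (-(n : ℝ)) := by
    rw [Real.mul_rpow (by positivity) (by positivity), ← Real.rpow_natCast (1 + ‖u‖) 2,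
      ← Real.rpow_mul (by positivity), Real.inv_rpow hM0.le, ← Real.rpow_neg hM0.le]
    rw [show -(-(n:ℝ)/2) = (n:ℝ)/2 by ring,
      show ((2:ℕ):ℝ) * (-(n:ℝ)/2) = -(n:ℝ) by push_cast; ring]
  rw [pker_norm n lam hρ, ← hA, ← hS]
  calc A * (ρ ^ 2 + S) ^ (-(n:ℝ) / 2)
      ≤ A * (M ^ ((n : ℝ) / 2) * (1 + ‖u‖) ^ (-(n : ℝ))) := by
        refine mul_le_mul_of_nonneg_left ?_ hA0
        rw [← hr2]; exact hr1
    _ = A * M ^ ((n : ℝ) / 2) * (1 + ‖u‖) ^ (-(n : ℝ)) := by ring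

lemma pker_smul (n : ℕ) (lam : ℝ) {r t : ℝ} (hr : 0 < r) (ht : 0 < t) (x : Fin n → ℝ) :
    Pker n lam (r • x) (r * t)
      = (r : ℂ) ^ (-(((n : ℂ) - Complex.I * lam) / 2)) * Pker n lam x t := by
  simp only [Pker]
  set s : ℂ := ((n : ℂ) - Complex.I * lam) / 2 with hs
  have hrC : (r : ℂ) ≠ 0 := Complex.ofReal_ne_zero.2 hr.ne'
  have hsum : ((r * t) ^ 2 + ∑ j, (r • x) j ^ 2 : ℝ) = r * (r * (t ^ 2 + ∑ j, x j ^ 2)) := by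
    simp only [Pi.smul_apply, smul_eq_mul, mul_pow]
    rw [← Finset.mul_sum]; ring
  have hcan : (r : ℂ) ^ (-s) = (r : ℂ) ^ s * ((r : ℂ) ^ (-s) * (r : ℂ) ^ (-s)) := by
    rw [← Complex.cpow_add _ _ hrC, ← Complex.cpow_add _ _ hrC]
    congr 1; ring
  rw [hsum, Complex.ofReal_mul r t, Complex.ofReal_mul r (r * (t ^ 2 + ∑ j, x j ^ 2)),
    Complex.mul_cpow_ofReal_nonneg hr.le ht.le,
    Complex.mul_cpow_ofReal_nonneg hr.le
      (by positivity : (0:ℝ) ≤ r * (t ^ 2 + ∑ j, x j ^ 2)),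
    Complex.ofReal_mul r (t ^ 2 + ∑ j, x j ^ 2),
    Complex.mul_cpow_ofReal_nonneg hr.le (by positivity)]
  conv_rhs => rw [hcan]
  ring


theorem stmt_4 (n : ℕ) (hn : 1 ≤ n) (lam : ℝ) (hlam : lam ≠ 0) :
    (∀ (x : Fin n → ℝ) (ρ : ℝ), 0 < ρ →
      Integrable (fun u : Fin n → ℝ => Pker n lam (x - u) ρ * Pker n (-lam) u 1)) ∧
    ∀ (x y : Fin n → ℝ) (ρ r : ℝ), 0 < ρ → 0 < r →
      (∫ u : Fin n → ℝ, Pker n lam (r⁻¹ • (x - y) - u) (ρ / r) * Pker n (-lam) u 1)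
        = ∫ u : Fin n → ℝ, Pker n lam (x - u) ρ * Pker n (-lam) (y - u) r := by
  constructor
  · intro x ρ hρ
    obtain ⟨C₁, hC₁0, hC₁⟩ := pker_decay n lam hρ x
    obtain ⟨C₂, hC₂0, hC₂⟩ := pker_decay n (-lam) one_pos (0 : Fin n → ℝ)
    have h2n : (Module.finrank ℝ (Fin n → ℝ) : ℝ) < 2 * n := by
      rw [Module.finrank_fin_fun]
      have : (1:ℝ) ≤ n := by exact_mod_cast hn
      linarith
    refine ((integrable_one_add_norm h2n).const_mul (C₁ * C₂)).mono'
      ?_ (Filter.Eventually.of_forall fun u => ?_)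
    · exact (((continuous_pker n lam ρ hρ).comp
        (continuous_const.sub continuous_id)).mul
        (continuous_pker n (-lam) 1 one_pos)).aestronglyMeasurable
    · rw [norm_mul]
      have e2 : ‖Pker n (-lam) u 1‖ ≤ C₂ * (1 + ‖u‖) ^ (-(n:ℝ)) := by
        have := hC₂ u
        rwa [zero_sub, pker_neg] at this
      calc ‖Pker n lam (x - u) ρ‖ * ‖Pker n (-lam) u 1‖
          ≤ (C₁ * (1 + ‖u‖) ^ (-(n:ℝ))) * (C₂ * (1 + ‖u‖) ^ (-(n:ℝ))) :=
            mul_le_mul (hC₁ u) e2 (norm_nonneg _) (by positivity)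
        _ = C₁ * C₂ * ((1 + ‖u‖) ^ (-(n:ℝ)) * (1 + ‖u‖) ^ (-(n:ℝ))) := by ring
        _ = C₁ * C₂ * (1 + ‖u‖) ^ (-(2 * (n:ℝ))) := by
            rw [← Real.rpow_add (by positivity)]
            congr 1; ring
        _ ≤ C₁ * C₂ * (1 + ‖u‖) ^ (-(2 * (n:ℝ))) := le_refl _
  · intro x y ρ r hρ hr
    have hrC : (r : ℂ) ≠ 0 := Complex.ofReal_ne_zero.2 hr.ne'
    set F : (Fin n → ℝ) → ℂ := fun u => Pker n lam (x - u) ρ * Pker n (-lam) (y - u) r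
      with hF
    have key : ∀ w : Fin n → ℝ, F (y + r • w)
        = (r : ℂ) ^ (-(n:ℂ)) *
          (Pker n lam (r⁻¹ • (x - y) - w) (ρ / r) * Pker n (-lam) w 1) := by
      intro w
      have h1 : x - (y + r • w) = r • (r⁻¹ • (x - y) - w) := by
        rw [smul_sub, smul_inv_smul₀ hr.ne']
        abel
      have h2 : y - (y + r • w) = -(r • w) := by abel
      simp only [hF]
      rw [h1, h2, pker_neg]
      have e1 := pker_smul n lam hr (div_pos hρ hr) (r⁻¹ • (x - y) - w)
      rw [show r * (ρ / r) = ρ by field_simp] at e1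
      have e2 := pker_smul n (-lam) hr one_pos w
      rw [mul_one] at e2
      rw [e1, e2]
      have e3 : (r:ℂ) ^ (-(((n:ℂ) - Complex.I * lam) / 2)) *
          (r:ℂ) ^ (-(((n:ℂ) - Complex.I * ((-lam : ℝ) : ℂ)) / 2)) = (r:ℂ) ^ (-(n:ℂ)) := by
        rw [← Complex.cpow_add _ _ hrC]
        congr 1; push_cast; ring
      rw [← e3]; ring
    have h1 : (∫ w, F (y + r • w))
        = (r:ℂ) ^ (-(n:ℂ)) *
          ∫ w, Pker n lam (r⁻¹ • (x - y) - w) (ρ / r) * Pker n (-lam) w 1 := by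
      simp_rw [key]
      exact integral_const_mul _ _
    have h2 : (∫ w, F (y + r • w))
        = |((r ^ (Module.finrank ℝ (Fin n → ℝ)) : ℝ))⁻¹| • ∫ v, F (y + v) :=
      Measure.integral_comp_smul volume (fun v => F (y + v)) r
    have h3 : (∫ v, F (y + v)) = ∫ u, F u := integral_add_left_eq_self F y
    rw [Module.finrank_fin_fun, h3] at h2
    rw [h2] at h1
    have habs : |((r ^ n : ℝ))⁻¹| = (r ^ n : ℝ)⁻¹ := abs_of_pos (by positivity)
    rw [habs, Complex.real_smul] at h1
    have hpow : ((r:ℂ) ^ (-(n:ℂ))) = (((r ^ n : ℝ))⁻¹ : ℂ) := by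
      push_cast
      rw [Complex.cpow_neg, Complex.cpow_natCast]
    rw [hpow] at h1
    push_cast at h1
    have hne : (((r:ℂ) ^ n)⁻¹ : ℂ) ≠ 0 := inv_ne_zero (pow_ne_zero _ hrC)
    exact (mul_left_cancel₀ hne h1).symm
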